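/- For all c₁, c₂ ≥ 0 there exists a constant K = K(c₁, c₂) > 0 such that for every f ∈ 𝓡_w^{c₁} and every g ∈ 𝓡_w^{c₂}, the convolution f ∗ g belongs to 𝓡_w^{c₁+c₂+1} and ‖f ∗ g‖_{𝓡_w^{c₁+c₂+1}} ≤ K ‖f‖_{𝓡_w^{c₁}} ‖g‖_{𝓡_w^{c₂}}. -/

import Mathlib

open MeasureTheory Real Set

noncomputable section

/-- The class `𝓡_w^c`: continuous functions on `[0,∞)` whose integral of the modulus up to `n`
is `≤ c₁ (n+1)^c e^{n/2}` for every integer `n ≥ 1`. -/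
def memRwC (c : ℝ) (f : ℝ → ℂ) : Prop :=
  ContinuousOn f (Set.Ici 0) ∧
  ∃ c₁ : ℝ, 0 < c₁ ∧ ∀ n : ℕ, 1 ≤ n →
    (∫ s in (0:ℝ)..(n:ℝ), ‖f s‖) ≤ c₁ * ((n:ℝ) + 1) ^ c * Real.exp ((n:ℝ) / 2)

/-- The norm `‖f‖_{𝓡_w^c}`: the supremum over integers `n ≥ 1` of
`(∫₀ⁿ |f|) / ((n+1)^c e^{n/2})` (indexed here by `n = k + 1`, `k : ℕ`). -/
def RwNorm (c : ℝ) (f : ℝ → ℂ) : ℝ :=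
  ⨆ k : ℕ, (∫ s in (0:ℝ)..((k:ℝ) + 1), ‖f s‖) /
    (((k:ℝ) + 2) ^ c * Real.exp (((k:ℝ) + 1) / 2))

/-- Convolution of two functions on `[0,∞)`: `(f ∗ g)(x) = ∫₀ˣ f(t) g(x−t) dt`. -/
def conv (f g : ℝ → ℂ) : ℝ → ℂ := fun x => ∫ t in (0:ℝ)..x, f t * g (x - t)

open scoped ENNReal

/-! ### Auxiliary lemmas -/

/-- continuity of the convolution-type parametric integral, real valued. -/
lemma contInnerR {F G : ℝ → ℝ} (hF : Continuous F) (hG : Continuous G) :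
    Continuous fun x => ∫ t in (0:ℝ)..x, F t * G (x - t) :=
  intervalIntegral.continuous_parametric_intervalIntegral_of_continuous
    (f := fun x t => F t * G (x - t)) (μ := volume)
    (by exact (hF.comp continuous_snd).mul (hG.comp (continuous_fst.sub continuous_snd)))
    continuous_id

lemma contInnerC {f g : ℝ → ℂ} (hf : Continuous f) (hg : Continuous g) :
    Continuous fun x => ∫ t in (0:ℝ)..x, f t * g (x - t) :=
  intervalIntegral.continuous_parametric_intervalIntegral_of_continuous
    (f := fun x t => f t * g (x - t)) (μ := volume)
    (by exact (hf.comp continuous_snd).mul (hg.comp (continuous_fst.sub continuous_snd)))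
    continuous_id

/-- Fubini over the triangle. -/
lemma swap_triangle {F G : ℝ → ℝ} (hF : Continuous F) (hG : Continuous G)
    (hF0 : ∀ t, 0 ≤ F t) (hG0 : ∀ t, 0 ≤ G t) {n : ℝ} (hn : 0 ≤ n) :
    (∫ x in (0:ℝ)..n, ∫ t in (0:ℝ)..x, F t * G (x - t)) =
      ∫ t in (0:ℝ)..n, F t * ∫ u in (0:ℝ)..(n - t), G u := by
  have hFG : Continuous fun p : ℝ × ℝ => F p.2 * G (p.1 - p.2) :=
    (hF.comp continuous_snd).mul (hG.comp (continuous_fst.sub continuous_snd))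
  set μ : Measure ℝ := volume.restrict (Set.Ioc (0:ℝ) n) with hμdef
  set φ : ℝ → ℝ → ℝ≥0∞ := fun x t =>
    {p : ℝ × ℝ | p.2 ≤ p.1}.indicator (fun p => ENNReal.ofReal (F p.2 * G (p.1 - p.2))) (x, t)
    with hφdef
  have hswap : ∫⁻ x, ∫⁻ t, φ x t ∂μ ∂μ = ∫⁻ t, ∫⁻ x, φ x t ∂μ ∂μ :=
    lintegral_lintegral_swap <| Measurable.aemeasurable <| Measurable.indicator
      (ENNReal.measurable_ofReal.comp hFG.measurable)
      ((isClosed_le continuous_snd continuous_fst).measurableSet)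
  -- left side
  have hL : ∫⁻ x, ∫⁻ t, φ x t ∂μ ∂μ =
      ENNReal.ofReal (∫ x in (0:ℝ)..n, ∫ t in (0:ℝ)..x, F t * G (x - t)) := by
    have h1 : ∀ x ∈ Set.Ioc (0:ℝ) n, (∫⁻ t, φ x t ∂μ) =
        ENNReal.ofReal (∫ t in (0:ℝ)..x, F t * G (x - t)) := by
      intro x hx
      have hxι : ∀ t, φ x t = (Set.Iic x).indicator
          (fun t => ENNReal.ofReal (F t * G (x - t))) t := by
        intro t
        simp only [hφdef, Set.indicator_apply, Set.mem_setOf_eq, Set.mem_Iic]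
      calc (∫⁻ t, φ x t ∂μ)
          = ∫⁻ t in Set.Iic x, ENNReal.ofReal (F t * G (x - t)) ∂μ := by
            simp_rw [hxι]; exact lintegral_indicator measurableSet_Iic _
        _ = ∫⁻ t in Set.Ioc (0:ℝ) x, ENNReal.ofReal (F t * G (x - t)) := by
            have hset : Set.Iic x ∩ Set.Ioc (0:ℝ) n = Set.Ioc (0:ℝ) x := by
              ext s
              simp only [Set.mem_inter_iff, Set.mem_Iic, Set.mem_Ioc]
              exact ⟨fun ⟨h1', h2', _⟩ => ⟨h2', h1'⟩, fun ⟨h1', h2'⟩ => ⟨h2', h1', h2'.trans hx.2⟩⟩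
            rw [hμdef, Measure.restrict_restrict measurableSet_Iic, hset]
        _ = ENNReal.ofReal (∫ t in Set.Ioc (0:ℝ) x, F t * G (x - t)) := by
            rw [ofReal_integral_eq_lintegral_ofReal]
            · exact (hF.mul (hG.comp (continuous_const.sub continuous_id))).integrableOn_Ioc
            · exact Filter.Eventually.of_forall fun t => mul_nonneg (hF0 t) (hG0 _)
        _ = ENNReal.ofReal (∫ t in (0:ℝ)..x, F t * G (x - t)) := by
            rw [intervalIntegral.integral_of_le hx.1.le]
    calc (∫⁻ x, ∫⁻ t, φ x t ∂μ ∂μ)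
        = ∫⁻ x in Set.Ioc (0:ℝ) n, ENNReal.ofReal (∫ t in (0:ℝ)..x, F t * G (x - t)) := by
          rw [hμdef]
          exact setLIntegral_congr_fun measurableSet_Ioc h1
      _ = ENNReal.ofReal (∫ x in Set.Ioc (0:ℝ) n, ∫ t in (0:ℝ)..x, F t * G (x - t)) := by
          rw [ofReal_integral_eq_lintegral_ofReal]
          · exact (contInnerR hF hG).integrableOn_Ioc
          · refine (ae_restrict_iff' measurableSet_Ioc).mpr (Filter.Eventually.of_forall ?_)
            intro x hx
            exact intervalIntegral.integral_nonneg hx.1.le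
              fun t _ => mul_nonneg (hF0 t) (hG0 _)
      _ = ENNReal.ofReal (∫ x in (0:ℝ)..n, ∫ t in (0:ℝ)..x, F t * G (x - t)) := by
          rw [intervalIntegral.integral_of_le hn]
  -- right side
  have hR : ∫⁻ t, ∫⁻ x, φ x t ∂μ ∂μ =
      ENNReal.ofReal (∫ t in (0:ℝ)..n, F t * ∫ u in (0:ℝ)..(n - t), G u) := by
    have h2 : ∀ t ∈ Set.Ioc (0:ℝ) n, (∫⁻ x, φ x t ∂μ) =
        ENNReal.ofReal (F t * ∫ u in (0:ℝ)..(n - t), G u) := by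
      intro t ht
      have hxι : ∀ x, φ x t = (Set.Ici t).indicator
          (fun x => ENNReal.ofReal (F t * G (x - t))) x := by
        intro x
        simp only [hφdef, Set.indicator_apply, Set.mem_setOf_eq, Set.mem_Ici]
      calc (∫⁻ x, φ x t ∂μ)
          = ∫⁻ x in Set.Ici t, ENNReal.ofReal (F t * G (x - t)) ∂μ := by
            simp_rw [hxι]; exact lintegral_indicator measurableSet_Ici _
        _ = ∫⁻ x in Set.Icc t n, ENNReal.ofReal (F t * G (x - t)) := by
            have hset : Set.Ici t ∩ Set.Ioc (0:ℝ) n = Set.Icc t n := by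
              ext s
              simp only [Set.mem_inter_iff, Set.mem_Ici, Set.mem_Ioc, Set.mem_Icc]
              exact ⟨fun ⟨h1', _, h3'⟩ => ⟨h1', h3'⟩, fun ⟨h1', h2'⟩ => ⟨h1', ht.1.trans_le h1', h2'⟩⟩
            rw [hμdef, Measure.restrict_restrict measurableSet_Ici, hset]
        _ = ENNReal.ofReal (∫ x in Set.Icc t n, F t * G (x - t)) := by
            rw [ofReal_integral_eq_lintegral_ofReal]
            · exact (continuous_const.mul
                (hG.comp (continuous_id.sub continuous_const))).integrableOn_Icc
            · exact Filter.Eventually.of_forall fun x => mul_nonneg (hF0 t) (hG0 _)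
        _ = ENNReal.ofReal (∫ x in t..n, F t * G (x - t)) := by
            rw [MeasureTheory.integral_Icc_eq_integral_Ioc,
              intervalIntegral.integral_of_le ht.2]
        _ = ENNReal.ofReal (F t * ∫ u in (0:ℝ)..(n - t), G u) := by
            rw [intervalIntegral.integral_const_mul]
            congr 1
            have := intervalIntegral.integral_comp_sub_right (a := t) (b := n) (fun u => G u) t
            rw [sub_self] at this
            rw [this]
    calc (∫⁻ t, ∫⁻ x, φ x t ∂μ ∂μ)
        = ∫⁻ t in Set.Ioc (0:ℝ) n, ENNReal.ofReal (F t * ∫ u in (0:ℝ)..(n - t), G u) := by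
          rw [hμdef]
          exact setLIntegral_congr_fun measurableSet_Ioc h2
      _ = ENNReal.ofReal (∫ t in Set.Ioc (0:ℝ) n, F t * ∫ u in (0:ℝ)..(n - t), G u) := by
          rw [ofReal_integral_eq_lintegral_ofReal]
          · have hcont : Continuous fun t : ℝ => ∫ u in (0:ℝ)..(n - t), G u :=
              intervalIntegral.continuous_parametric_intervalIntegral_of_continuous
                (f := fun _ u => G u) (μ := volume)
                (by exact hG.comp continuous_snd) (continuous_const.sub continuous_id)
            exact (hF.mul hcont).integrableOn_Ioc
          · refine (ae_restrict_iff' measurableSet_Ioc).mpr (Filter.Eventually.of_forall ?_)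
            intro t ht
            exact mul_nonneg (hF0 t)
              (intervalIntegral.integral_nonneg (by linarith [ht.2]) fun u _ => hG0 u)
      _ = ENNReal.ofReal (∫ t in (0:ℝ)..n, F t * ∫ u in (0:ℝ)..(n - t), G u) := by
          rw [intervalIntegral.integral_of_le hn]
  rw [hL, hR] at hswap
  have hA : 0 ≤ ∫ x in (0:ℝ)..n, ∫ t in (0:ℝ)..x, F t * G (x - t) :=
    intervalIntegral.integral_nonneg hn fun x hx =>
      intervalIntegral.integral_nonneg hx.1 fun t _ => mul_nonneg (hF0 t) (hG0 _)
  have hB : 0 ≤ ∫ t in (0:ℝ)..n, F t * ∫ u in (0:ℝ)..(n - t), G u :=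
    intervalIntegral.integral_nonneg hn fun t ht =>
      mul_nonneg (hF0 t) (intervalIntegral.integral_nonneg (by linarith [ht.2]) fun u _ => hG0 u)
  exact (ENNReal.ofReal_eq_ofReal_iff hA hB).mp hswap

lemma rw_den_pos (c : ℝ) (k : ℕ) : 0 < ((k:ℝ) + 2) ^ c * Real.exp (((k:ℝ) + 1) / 2) := by
  positivity

lemma rw_bddAbove {c : ℝ} {f : ℝ → ℂ} (hf : memRwC c f) :
    BddAbove (Set.range fun k : ℕ =>
      (∫ s in (0:ℝ)..((k:ℝ) + 1), ‖f s‖) /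
        (((k:ℝ) + 2) ^ c * Real.exp (((k:ℝ) + 1) / 2))) := by
  obtain ⟨-, cf, _, hcf⟩ := hf
  refine ⟨cf, ?_⟩
  rintro x ⟨k, rfl⟩
  have hk := hcf (k + 1) (Nat.le_add_left 1 k)
  push_cast at hk
  have h2 : ((k:ℝ) + 1 + 1) = (k:ℝ) + 2 := by ring
  rw [h2] at hk
  rw [div_le_iff₀ (rw_den_pos c k)]
  calc (∫ s in (0:ℝ)..((k:ℝ) + 1), ‖f s‖)
      ≤ cf * ((k:ℝ) + 2) ^ c * Real.exp (((k:ℝ) + 1) / 2) := hk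
    _ = cf * (((k:ℝ) + 2) ^ c * Real.exp (((k:ℝ) + 1) / 2)) := by ring

lemma rw_norm_bound {c : ℝ} {f : ℝ → ℂ} (hf : memRwC c f) (k : ℕ) :
    (∫ s in (0:ℝ)..((k:ℝ) + 1), ‖f s‖) ≤
      RwNorm c f * (((k:ℝ) + 2) ^ c * Real.exp (((k:ℝ) + 1) / 2)) := by
  have h := le_ciSup (rw_bddAbove hf) k
  rw [RwNorm]
  exact (div_le_iff₀ (rw_den_pos c k)).mp h

lemma rw_norm_nonneg {c : ℝ} {f : ℝ → ℂ} (hf : memRwC c f) : 0 ≤ RwNorm c f := by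
  refine le_trans ?_ (le_ciSup (rw_bddAbove hf) 0)
  exact div_nonneg
    (intervalIntegral.integral_nonneg (by norm_num) fun u _ => norm_nonneg _)
    (rw_den_pos c 0).le

lemma rw_norm_bound' {c : ℝ} {f : ℝ → ℂ} (hf : memRwC c f) (m : ℕ) (hm : 1 ≤ m) :
    (∫ s in (0:ℝ)..(m:ℝ), ‖f s‖) ≤
      RwNorm c f * (((m:ℝ) + 1) ^ c * Real.exp ((m:ℝ) / 2)) := by
  obtain ⟨k, rfl⟩ : ∃ k, m = k + 1 := ⟨m - 1, (Nat.succ_pred_eq_of_pos hm).symm⟩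
  have h := rw_norm_bound hf k
  push_cast
  have h2 : ((k:ℝ) + 1 + 1) = (k:ℝ) + 2 := by ring
  rw [h2]
  exact h

/-- for all `c₁, c₂ ≥ 0` there is `K > 0` such that for `f ∈ 𝓡_w^{c₁}` and
`g ∈ 𝓡_w^{c₂}`, one has `f ∗ g ∈ 𝓡_w^{c₁+c₂+1}` with
`‖f ∗ g‖_{𝓡_w^{c₁+c₂+1}} ≤ K ‖f‖_{𝓡_w^{c₁}} ‖g‖_{𝓡_w^{c₂}}`. -/
theorem conv_mem_RwC (c₁ c₂ : ℝ) (hc₁ : 0 ≤ c₁) (hc₂ : 0 ≤ c₂) :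
    ∃ K : ℝ, 0 < K ∧ ∀ f g : ℝ → ℂ, memRwC c₁ f → memRwC c₂ g →
      memRwC (c₁ + c₂ + 1) (conv f g) ∧
      RwNorm (c₁ + c₂ + 1) (conv f g) ≤ K * RwNorm c₁ f * RwNorm c₂ g := by
  refine ⟨Real.exp 1 * 2 ^ c₂, by positivity, ?_⟩
  intro f g hf hg
  set Nf := RwNorm c₁ f with hNfdef
  set Ng := RwNorm c₂ g with hNgdef
  have hNf0 : 0 ≤ Nf := rw_norm_nonneg hf
  have hNg0 : 0 ≤ Ng := rw_norm_nonneg hg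
  set fe : ℝ → ℂ := fun t => f (max t 0) with hfedef
  set ge : ℝ → ℂ := fun t => g (max t 0) with hgedef
  have hfe : Continuous fe :=
    hf.1.comp_continuous (continuous_id.max continuous_const) fun t => le_max_right t 0
  have hge : Continuous ge :=
    hg.1.comp_continuous (continuous_id.max continuous_const) fun t => le_max_right t 0
  set F : ℝ → ℝ := fun t => ‖fe t‖ with hFdef
  set G : ℝ → ℝ := fun t => ‖ge t‖ with hGdef
  have hFc : Continuous F := continuous_norm.comp hfe
  have hGc : Continuous G := continuous_norm.comp hge
  have hF0 : ∀ t, 0 ≤ F t := fun t => norm_nonneg _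
  have hG0 : ∀ t, 0 ≤ G t := fun t => norm_nonneg _
  -- on [0, y] the extension agrees
  have hFeq : ∀ y : ℝ, 0 ≤ y → (∫ s in (0:ℝ)..y, F s) = ∫ s in (0:ℝ)..y, ‖f s‖ := by
    intro y hy
    refine intervalIntegral.integral_congr fun s hs => ?_
    rw [Set.uIcc_of_le hy] at hs
    simp only [hFdef, hfedef, max_eq_left hs.1]
  have hGeq : ∀ y : ℝ, 0 ≤ y → (∫ s in (0:ℝ)..y, G s) = ∫ s in (0:ℝ)..y, ‖g s‖ := by
    intro y hy
    refine intervalIntegral.integral_congr fun s hs => ?_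
    rw [Set.uIcc_of_le hy] at hs
    simp only [hGdef, hgedef, max_eq_left hs.1]
  have hFb : ∀ m : ℕ, 1 ≤ m → (∫ s in (0:ℝ)..(m:ℝ), F s) ≤
      Nf * (((m:ℝ) + 1) ^ c₁ * Real.exp ((m:ℝ) / 2)) := by
    intro m hm
    rw [hFeq m m.cast_nonneg]
    exact rw_norm_bound' hf m hm
  have hGb : ∀ m : ℕ, 1 ≤ m → (∫ s in (0:ℝ)..(m:ℝ), G s) ≤
      Ng * (((m:ℝ) + 1) ^ c₂ * Real.exp ((m:ℝ) / 2)) := by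
    intro m hm
    rw [hGeq m m.cast_nonneg]
    exact rw_norm_bound' hg m hm
  -- Claim C : bound for ∫₀^y G for arbitrary real y ≥ 0
  have hGint : ∀ y : ℝ, 0 ≤ y →
      (∫ u in (0:ℝ)..y, G u) ≤ Ng * ((y + 2) ^ c₂ * Real.exp ((y + 1) / 2)) := by
    intro y hy
    rcases eq_or_lt_of_le hy with h | h
    · rw [← h, intervalIntegral.integral_same]
      have : (0:ℝ) < (0 + 2 : ℝ) ^ c₂ * Real.exp ((0 + 1) / 2) := by positivity
      nlinarith
    · set m := ⌈y⌉₊ with hmdef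
      have hm1 : 1 ≤ m := Nat.one_le_ceil_iff.mpr h
      have hym : y ≤ (m:ℝ) := Nat.le_ceil y
      have hmy : (m:ℝ) ≤ y + 1 := (Nat.ceil_lt_add_one hy).le
      calc (∫ u in (0:ℝ)..y, G u)
          ≤ ∫ u in (0:ℝ)..(m:ℝ), G u :=
            intervalIntegral.integral_mono_interval le_rfl hy hym
              (Filter.Eventually.of_forall hG0) (hGc.intervalIntegrable _ _)
        _ ≤ Ng * (((m:ℝ) + 1) ^ c₂ * Real.exp ((m:ℝ) / 2)) := hGb m hm1
        _ ≤ Ng * ((y + 2) ^ c₂ * Real.exp ((y + 1) / 2)) := by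
            refine mul_le_mul_of_nonneg_left ?_ hNg0
            refine mul_le_mul ?_ (Real.exp_le_exp.mpr (by linarith)) (Real.exp_pos _).le
              (Real.rpow_nonneg (by linarith) _)
            exact Real.rpow_le_rpow (by positivity) (by linarith) hc₂
  -- Claim E : weighted integral of F
  have hFexp : ∀ n : ℕ, (∫ t in (0:ℝ)..(n:ℝ), F t * Real.exp (-t / 2)) ≤
      Nf * Real.exp (1 / 2) * n * ((n:ℝ) + 1) ^ c₁ := by
    intro n
    have hcont : Continuous fun t => F t * Real.exp (-t / 2) :=
      hFc.mul (Real.continuous_exp.comp (continuous_id.neg.div_const 2))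
    have hsum := intervalIntegral.sum_integral_adjacent_intervals
      (a := fun k : ℕ => (k : ℝ)) (n := n)
      (f := fun t => F t * Real.exp (-t / 2)) (μ := volume)
      (fun k _ => hcont.intervalIntegrable _ _)
    simp only [Nat.cast_zero] at hsum
    rw [← hsum]
    have hterm : ∀ k ∈ Finset.range n, (∫ t in ((k:ℕ):ℝ)..((k + 1 : ℕ):ℝ), F t * Real.exp (-t / 2))
        ≤ Nf * Real.exp (1 / 2) * ((n:ℝ) + 1) ^ c₁ := by
      intro k hk
      have hkn : (k:ℝ) + 2 ≤ (n:ℝ) + 1 := by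
        have := Finset.mem_range.mp hk
        have : (k:ℝ) + 1 ≤ (n:ℝ) := by exact_mod_cast this
        linarith
      have hcast : ((k + 1 : ℕ):ℝ) = (k:ℝ) + 1 := by push_cast; ring
      rw [hcast]
      have step1 : (∫ t in ((k:ℕ):ℝ)..((k:ℝ) + 1), F t * Real.exp (-t / 2))
          ≤ ∫ t in ((k:ℕ):ℝ)..((k:ℝ) + 1), F t * Real.exp (-(k:ℝ) / 2) := by
        refine intervalIntegral.integral_mono_on (by linarith)
          (hcont.intervalIntegrable _ _) ((hFc.mul continuous_const).intervalIntegrable _ _)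
          fun t ht => ?_
        exact mul_le_mul_of_nonneg_left
          (Real.exp_le_exp.mpr (by linarith [ht.1])) (hF0 t)
      have step2 : (∫ t in ((k:ℕ):ℝ)..((k:ℝ) + 1), F t * Real.exp (-(k:ℝ) / 2))
          = (∫ t in ((k:ℕ):ℝ)..((k:ℝ) + 1), F t) * Real.exp (-(k:ℝ) / 2) :=
        intervalIntegral.integral_mul_const _ _
      have step3 : (∫ t in ((k:ℕ):ℝ)..((k:ℝ) + 1), F t) ≤ ∫ t in (0:ℝ)..((k:ℝ) + 1), F t :=
        intervalIntegral.integral_mono_interval k.cast_nonneg (by linarith) le_rfl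
          (Filter.Eventually.of_forall hF0) (hFc.intervalIntegrable _ _)
      have step4 : (∫ t in (0:ℝ)..((k:ℝ) + 1), F t)
          ≤ Nf * (((k:ℝ) + 2) ^ c₁ * Real.exp (((k:ℝ) + 1) / 2)) := by
        have := hFb (k + 1) (Nat.le_add_left 1 k)
        push_cast at this
        have h2 : ((k:ℝ) + 1 + 1) = (k:ℝ) + 2 := by ring
        rw [h2] at this
        exact this
      have hexp1 : Real.exp (((k:ℝ) + 1) / 2) * Real.exp (-(k:ℝ) / 2) = Real.exp (1 / 2) := by
        rw [← Real.exp_add]; ring_nf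
      calc (∫ t in ((k:ℕ):ℝ)..((k:ℝ) + 1), F t * Real.exp (-t / 2))
          ≤ (∫ t in ((k:ℕ):ℝ)..((k:ℝ) + 1), F t) * Real.exp (-(k:ℝ) / 2) := by
            rw [← step2]; exact step1
        _ ≤ (Nf * (((k:ℝ) + 2) ^ c₁ * Real.exp (((k:ℝ) + 1) / 2))) * Real.exp (-(k:ℝ) / 2) :=
            mul_le_mul_of_nonneg_right (step3.trans step4) (Real.exp_pos _).le
        _ = Nf * Real.exp (1 / 2) * ((k:ℝ) + 2) ^ c₁ := by
            rw [mul_assoc, mul_assoc, hexp1]; ring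
        _ ≤ Nf * Real.exp (1 / 2) * ((n:ℝ) + 1) ^ c₁ := by
            refine mul_le_mul_of_nonneg_left ?_ (by positivity)
            exact Real.rpow_le_rpow (by positivity) hkn hc₁
    calc (∑ k ∈ Finset.range n, ∫ t in ((k:ℕ):ℝ)..((k + 1:ℕ):ℝ), F t * Real.exp (-t / 2))
        ≤ ∑ _k ∈ Finset.range n, Nf * Real.exp (1 / 2) * ((n:ℝ) + 1) ^ c₁ :=
          Finset.sum_le_sum hterm
      _ = n * (Nf * Real.exp (1 / 2) * ((n:ℝ) + 1) ^ c₁) := by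
          rw [Finset.sum_const, Finset.card_range, nsmul_eq_mul]
      _ = Nf * Real.exp (1 / 2) * n * ((n:ℝ) + 1) ^ c₁ := by ring
  -- continuity of the convolution
  have hCcont : Continuous fun x => ∫ t in (0:ℝ)..x, fe t * ge (x - t) := contInnerC hfe hge
  have hconv_eq : ∀ x : ℝ, 0 ≤ x → conv f g x = ∫ t in (0:ℝ)..x, fe t * ge (x - t) := by
    intro x hx
    refine intervalIntegral.integral_congr fun t ht => ?_
    rw [Set.uIcc_of_le hx] at ht
    simp only [hfedef, hgedef, max_eq_left ht.1, max_eq_left (sub_nonneg.mpr ht.2)]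
  have hinner_cont : Continuous fun x => ∫ t in (0:ℝ)..x, F t * G (x - t) := contInnerR hFc hGc
  -- the main integral bound
  have main : ∀ n : ℕ, 1 ≤ n → (∫ x in (0:ℝ)..(n:ℝ), ‖conv f g x‖) ≤
      Real.exp 1 * 2 ^ c₂ * Nf * Ng * (((n:ℝ) + 1) ^ (c₁ + c₂ + 1) * Real.exp ((n:ℝ) / 2)) := by
    intro n hn
    have hn0 : (0:ℝ) ≤ (n:ℝ) := n.cast_nonneg
    have hn1 : (1:ℝ) ≤ (n:ℝ) := by exact_mod_cast hn
    have step1 : (∫ x in (0:ℝ)..(n:ℝ), ‖conv f g x‖) ≤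
        ∫ x in (0:ℝ)..(n:ℝ), ∫ t in (0:ℝ)..x, F t * G (x - t) := by
      have e1 : (∫ x in (0:ℝ)..(n:ℝ), ‖conv f g x‖) =
          ∫ x in (0:ℝ)..(n:ℝ), ‖∫ t in (0:ℝ)..x, fe t * ge (x - t)‖ := by
        refine intervalIntegral.integral_congr fun x hx => ?_
        rw [Set.uIcc_of_le hn0] at hx
        rw [hconv_eq x hx.1]
      rw [e1]
      refine intervalIntegral.integral_mono_on hn0
        ((continuous_norm.comp hCcont).intervalIntegrable _ _)
        (hinner_cont.intervalIntegrable _ _) fun x hx => ?_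
      have h2 := intervalIntegral.norm_integral_le_integral_norm
        (f := fun t => fe t * ge (x - t)) (a := 0) (b := x) (μ := volume) hx.1
      refine h2.trans_eq ?_
      refine intervalIntegral.integral_congr fun t _ => ?_
      simp only [hFdef, hGdef, norm_mul]
    have step2 := swap_triangle hFc hGc hF0 hG0 hn0
    have step3 : (∫ t in (0:ℝ)..(n:ℝ), F t * ∫ u in (0:ℝ)..((n:ℝ) - t), G u) ≤
        ∫ t in (0:ℝ)..(n:ℝ),
          (Ng * (((n:ℝ) + 2) ^ c₂ * Real.exp (((n:ℝ) + 1) / 2))) * (F t * Real.exp (-t / 2)) := by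
      have hcont1 : Continuous fun t : ℝ => F t * ∫ u in (0:ℝ)..((n:ℝ) - t), G u := by
        refine hFc.mul ?_
        exact intervalIntegral.continuous_parametric_intervalIntegral_of_continuous
          (f := fun _ u => G u) (μ := volume)
          (by exact hGc.comp continuous_snd) (continuous_const.sub continuous_id)
      have hcont2 : Continuous fun t : ℝ =>
          (Ng * (((n:ℝ) + 2) ^ c₂ * Real.exp (((n:ℝ) + 1) / 2))) * (F t * Real.exp (-t / 2)) :=
        continuous_const.mul (hFc.mul (Real.continuous_exp.comp (continuous_id.neg.div_const 2)))
      refine intervalIntegral.integral_mono_on hn0 (hcont1.intervalIntegrable _ _)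
        (hcont2.intervalIntegrable _ _) fun t ht => ?_
      have h3 := hGint ((n:ℝ) - t) (by linarith [ht.2])
      have hexp2 : Real.exp (((n:ℝ) - t + 1) / 2) =
          Real.exp (((n:ℝ) + 1) / 2) * Real.exp (-t / 2) := by
        rw [← Real.exp_add]; ring_nf
      calc F t * ∫ u in (0:ℝ)..((n:ℝ) - t), G u
          ≤ F t * (Ng * (((n:ℝ) - t + 2) ^ c₂ * Real.exp (((n:ℝ) - t + 1) / 2))) :=
            mul_le_mul_of_nonneg_left h3 (hF0 t)
        _ = (Ng * (((n:ℝ) - t + 2) ^ c₂ * Real.exp (((n:ℝ) + 1) / 2))) *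
              (F t * Real.exp (-t / 2)) := by
            rw [hexp2]; ring
        _ ≤ (Ng * (((n:ℝ) + 2) ^ c₂ * Real.exp (((n:ℝ) + 1) / 2))) *
              (F t * Real.exp (-t / 2)) := by
            refine mul_le_mul_of_nonneg_right ?_
              (mul_nonneg (hF0 t) (Real.exp_pos _).le)
            refine mul_le_mul_of_nonneg_left ?_ hNg0
            refine mul_le_mul_of_nonneg_right ?_ (Real.exp_pos _).le
            exact Real.rpow_le_rpow (by linarith [ht.1, ht.2]) (by linarith [ht.1, ht.2]) hc₂
    have step4 : (∫ x in (0:ℝ)..(n:ℝ), ‖conv f g x‖) ≤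
        (Ng * (((n:ℝ) + 2) ^ c₂ * Real.exp (((n:ℝ) + 1) / 2))) *
          (Nf * Real.exp (1 / 2) * n * ((n:ℝ) + 1) ^ c₁) := by
      refine (step1.trans_eq step2).trans (step3.trans ?_)
      rw [intervalIntegral.integral_const_mul]
      exact mul_le_mul_of_nonneg_left (hFexp n) (by positivity)
    refine step4.trans ?_
    have hP : (0:ℝ) < (n:ℝ) + 1 := by linarith
    have e1 : Real.exp (((n:ℝ) + 1) / 2) * Real.exp (1 / 2) =
        Real.exp 1 * Real.exp ((n:ℝ) / 2) := by
      rw [← Real.exp_add, ← Real.exp_add]; ring_nf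
    have e2 : ((n:ℝ) + 2) ^ c₂ ≤ 2 ^ c₂ * ((n:ℝ) + 1) ^ c₂ := by
      rw [← Real.mul_rpow (by norm_num) hP.le]
      exact Real.rpow_le_rpow (by positivity) (by linarith) hc₂
    have e3 : ((n:ℝ) + 1) ^ c₁ * ((n:ℝ) + 1) ^ c₂ * ((n:ℝ) + 1) = ((n:ℝ) + 1) ^ (c₁ + c₂ + 1) := by
      rw [Real.rpow_add hP, Real.rpow_add hP, Real.rpow_one]
    calc (Ng * (((n:ℝ) + 2) ^ c₂ * Real.exp (((n:ℝ) + 1) / 2))) *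
          (Nf * Real.exp (1 / 2) * n * ((n:ℝ) + 1) ^ c₁)
        = (Nf * Ng * ((n:ℝ) + 1) ^ c₁ * (Real.exp (((n:ℝ) + 1) / 2) * Real.exp (1 / 2))) *
            ((n:ℝ) + 2) ^ c₂ * (n:ℝ) := by ring
      _ = (Nf * Ng * ((n:ℝ) + 1) ^ c₁ * (Real.exp 1 * Real.exp ((n:ℝ) / 2))) *
            ((n:ℝ) + 2) ^ c₂ * (n:ℝ) := by rw [e1]
      _ ≤ (Nf * Ng * ((n:ℝ) + 1) ^ c₁ * (Real.exp 1 * Real.exp ((n:ℝ) / 2))) *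
            (2 ^ c₂ * ((n:ℝ) + 1) ^ c₂) * ((n:ℝ) + 1) := by
          have hX : 0 ≤ Nf * Ng * ((n:ℝ) + 1) ^ c₁ * (Real.exp 1 * Real.exp ((n:ℝ) / 2)) :=
            mul_nonneg (mul_nonneg (mul_nonneg hNf0 hNg0)
              (Real.rpow_nonneg (by linarith) _)) (by positivity)
          refine mul_le_mul (mul_le_mul_of_nonneg_left e2 hX) (by linarith) hn0 ?_
          exact mul_nonneg hX (by positivity)
      _ = (Real.exp 1 * 2 ^ c₂ * Nf * Ng) *
            ((((n:ℝ) + 1) ^ c₁ * ((n:ℝ) + 1) ^ c₂ * ((n:ℝ) + 1)) * Real.exp ((n:ℝ) / 2)) := by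
          ring
      _ = Real.exp 1 * 2 ^ c₂ * Nf * Ng *
            (((n:ℝ) + 1) ^ (c₁ + c₂ + 1) * Real.exp ((n:ℝ) / 2)) := by rw [e3]
  -- assemble the two conclusions
  constructor
  · constructor
    · refine (hCcont.continuousOn).congr fun x hx => ?_
      exact hconv_eq x hx
    · refine ⟨Real.exp 1 * 2 ^ c₂ * Nf * Ng + 1, ?_, ?_⟩
      · have : (0:ℝ) ≤ Real.exp 1 * 2 ^ c₂ * Nf * Ng :=
          mul_nonneg (mul_nonneg (by positivity) hNf0) hNg0
        linarith
      · intro n hn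
        have h := main n hn
        have hPB : (0:ℝ) < ((n:ℝ) + 1) ^ (c₁ + c₂ + 1) * Real.exp ((n:ℝ) / 2) := by positivity
        calc (∫ x in (0:ℝ)..(n:ℝ), ‖conv f g x‖)
            ≤ Real.exp 1 * 2 ^ c₂ * Nf * Ng *
                (((n:ℝ) + 1) ^ (c₁ + c₂ + 1) * Real.exp ((n:ℝ) / 2)) := h
          _ ≤ (Real.exp 1 * 2 ^ c₂ * Nf * Ng + 1) *
                (((n:ℝ) + 1) ^ (c₁ + c₂ + 1) * Real.exp ((n:ℝ) / 2)) := by nlinarith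
          _ = (Real.exp 1 * 2 ^ c₂ * Nf * Ng + 1) * ((n:ℝ) + 1) ^ (c₁ + c₂ + 1) *
                Real.exp ((n:ℝ) / 2) := by ring
  · rw [RwNorm]
    refine ciSup_le fun k => ?_
    have h := main (k + 1) (Nat.le_add_left 1 k)
    push_cast at h
    have h2 : ((k:ℝ) + 1 + 1) = (k:ℝ) + 2 := by ring
    rw [h2] at h
    rw [div_le_iff₀ (rw_den_pos (c₁ + c₂ + 1) k)]
    calc (∫ s in (0:ℝ)..((k:ℝ) + 1), ‖conv f g s‖)
        ≤ Real.exp 1 * 2 ^ c₂ * Nf * Ng *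
            (((k:ℝ) + 2) ^ (c₁ + c₂ + 1) * Real.exp (((k:ℝ) + 1) / 2)) := h
      _ = Real.exp 1 * 2 ^ c₂ * Nf * Ng *
            (((k:ℝ) + 2) ^ (c₁ + c₂ + 1) * Real.exp (((k:ℝ) + 1) / 2)) := by ring
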